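/- arXiv:1310.6310 — 2 statements merged into one kernel-verified Lean document; each statement's English description precedes it below -/
import Mathlib

section
/- Suppose the 2×2 matrix-valued differentiable functions B, C, X of a real variable x (with values being operators B(x): ℂ² → K, C(x): K → ℂ², X(x): K → K on a finite-dimensional complex inner product space K) satisfy B'(x) = -(A·B(x)·σ₂ + B(x)·γ)·σ₁⁻¹, C'(x) = σ₁⁻¹·(-σ₂·C(x)·A_ζ + γ·C(x)), and X'(x) = B(x)·σ₂·C(x), where σ₁ = σ₁* is invertible, σ₂ = σ₂*, γ* = -γ, and A, A_ζ are fixed operators on K. If the Lyapunov equation A·X(x₀) + X(x₀)·A_ζ + B(x₀)·σ₁·C(x₀) = 0 holds at some x₀, then it holds for all x ∈ ℝ. -/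
open Matrix

lemma hasDerivAt_matMul_entry {m p q : ℕ}
    (M : ℝ → Matrix (Fin m) (Fin p) ℂ) (N : ℝ → Matrix (Fin p) (Fin q) ℂ)
    (M' : Matrix (Fin m) (Fin p) ℂ) (N' : Matrix (Fin p) (Fin q) ℂ) (x : ℝ)
    (hM : ∀ i j, HasDerivAt (fun y => M y i j) (M' i j) x)
    (hN : ∀ i j, HasDerivAt (fun y => N y i j) (N' i j) x) :
    ∀ i j, HasDerivAt (fun y => (M y * N y) i j) ((M' * N x + M x * N') i j) x := by
  intro i j
  have h : (fun y => (M y * N y) i j) = fun y => ∑ k, M y i k * N y k j := by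
    funext y; simp [Matrix.mul_apply]
  rw [h]
  have := HasDerivAt.fun_sum (fun k (_ : k ∈ Finset.univ) => (hM i k).mul (hN k j))
  simpa [Matrix.mul_apply, Matrix.add_apply, Finset.sum_add_distrib] using this

/-- Permanence of the Lyapunov equation along the prevessel flow. -/
theorem stmt_5 {n : ℕ}
    (A Aζ : Matrix (Fin n) (Fin n) ℂ)
    (σ₁ σ₂ γ : Matrix (Fin 2) (Fin 2) ℂ)
    (hσ₁herm : σ₁ᴴ = σ₁) (hσ₁inv : IsUnit σ₁.det)
    (hσ₂herm : σ₂ᴴ = σ₂) (hγ : γᴴ = -γ)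
    (B : ℝ → Matrix (Fin n) (Fin 2) ℂ)
    (C : ℝ → Matrix (Fin 2) (Fin n) ℂ)
    (X : ℝ → Matrix (Fin n) (Fin n) ℂ)
    (hB : ∀ (x : ℝ) (i : Fin n) (j : Fin 2),
      HasDerivAt (fun y => B y i j) ((-(A * B x * σ₂ + B x * γ) * σ₁⁻¹) i j) x)
    (hC : ∀ (x : ℝ) (i : Fin 2) (j : Fin n),
      HasDerivAt (fun y => C y i j) ((σ₁⁻¹ * (-(σ₂ * C x * Aζ) + γ * C x)) i j) x)
    (hX : ∀ (x : ℝ) (i j : Fin n),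
      HasDerivAt (fun y => X y i j) ((B x * σ₂ * C x) i j) x)
    (x₀ : ℝ) (h0 : A * X x₀ + X x₀ * Aζ + B x₀ * σ₁ * C x₀ = 0) :
    ∀ x : ℝ, A * X x + X x * Aζ + B x * σ₁ * C x = 0 := by
  set B' : ℝ → Matrix (Fin n) (Fin 2) ℂ := fun x => -(A * B x * σ₂ + B x * γ) * σ₁⁻¹ with hB'def
  set C' : ℝ → Matrix (Fin 2) (Fin n) ℂ := fun x => σ₁⁻¹ * (-(σ₂ * C x * Aζ) + γ * C x) with hC'def
  -- derivative of F at x, entrywise, is zero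
  have key : ∀ (x : ℝ) (i j : Fin n),
      HasDerivAt (fun y => (A * X y + X y * Aζ + B y * σ₁ * C y) i j) 0 x := by
    intro x i j
    have hAX : ∀ i j, HasDerivAt (fun y => (A * X y) i j) ((A * (B x * σ₂ * C x)) i j) x := by
      have := hasDerivAt_matMul_entry (fun _ => A) X 0 (B x * σ₂ * C x) x
        (fun i j => hasDerivAt_const x (A i j)) (hX x)
      simpa using this
    have hXA : ∀ i j, HasDerivAt (fun y => (X y * Aζ) i j) ((B x * σ₂ * C x * Aζ) i j) x := by
      have := hasDerivAt_matMul_entry X (fun _ => Aζ) (B x * σ₂ * C x) 0 x (hX x)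
        (fun i j => hasDerivAt_const x (Aζ i j))
      simpa using this
    have hBσ : ∀ i j, HasDerivAt (fun y => (B y * σ₁) i j) ((B' x * σ₁) i j) x := by
      have := hasDerivAt_matMul_entry B (fun _ => σ₁) (B' x) 0 x (hB x)
        (fun i j => hasDerivAt_const x (σ₁ i j))
      simpa using this
    have hBσC : ∀ i j, HasDerivAt (fun y => (B y * σ₁ * C y) i j)
        ((B' x * σ₁ * C x + B x * σ₁ * C' x) i j) x := by
      have := hasDerivAt_matMul_entry (fun y => B y * σ₁) C (B' x * σ₁) (C' x) x hBσ (hC x)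
      simpa using this
    have hsum := ((hAX i j).fun_add (hXA i j)).fun_add (hBσC i j)
    have hzero : A * (B x * σ₂ * C x) + B x * σ₂ * C x * Aζ
        + (B' x * σ₁ * C x + B x * σ₁ * C' x) = 0 := by
      have h1 : B' x * σ₁ = -(A * B x * σ₂ + B x * γ) := by
        rw [hB'def]
        rw [Matrix.mul_assoc, Matrix.nonsing_inv_mul σ₁ hσ₁inv, Matrix.mul_one]
      have h2 : σ₁ * C' x = -(σ₂ * C x * Aζ) + γ * C x := by
        rw [hC'def]
        rw [← Matrix.mul_assoc, Matrix.mul_nonsing_inv σ₁ hσ₁inv, Matrix.one_mul]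
      calc A * (B x * σ₂ * C x) + B x * σ₂ * C x * Aζ + (B' x * σ₁ * C x + B x * σ₁ * C' x)
          = A * (B x * σ₂ * C x) + B x * σ₂ * C x * Aζ
            + ((B' x * σ₁) * C x + B x * (σ₁ * C' x)) := by
            rw [Matrix.mul_assoc (B x) σ₁ (C' x)]
        _ = 0 := by
            rw [h1, h2]
            simp only [Matrix.neg_mul, Matrix.add_mul, Matrix.mul_add, Matrix.mul_neg,
              Matrix.mul_assoc]
            abel
    have := hsum
    rw [show (A * (B x * σ₂ * C x)) i j + (B x * σ₂ * C x * Aζ) i j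
        + (B' x * σ₁ * C x + B x * σ₁ * C' x) i j
        = (A * (B x * σ₂ * C x) + B x * σ₂ * C x * Aζ
          + (B' x * σ₁ * C x + B x * σ₁ * C' x)) i j by simp [Matrix.add_apply],
      hzero] at this
    simpa using this
  intro x
  ext i j
  have hconst : ∀ y : ℝ, (A * X y + X y * Aζ + B y * σ₁ * C y) i j
      = (A * X x₀ + X x₀ * Aζ + B x₀ * σ₁ * C x₀) i j := by
    intro y
    exact is_const_of_deriv_eq_zero (fun z => ((key z i j)).differentiableAt)
      (fun z => (key z i j).deriv) y x₀
  rw [hconst x, h0]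
end

section
/- Let k, m ∈ ℝ with k ≠ 0, and define β(x,t) = -2k²·(e^{8k²mt} + 2e^{4k²x})/(e^{8k²mt} - 2e^{4k²x}) on the set Ω = {(x,t) : e^{8k²mt} ≠ 2e^{4k²x}}. Then β satisfies ∂²β/∂t² = ∂/∂x[ -(1/2)(β')² - (1/4)β''' + ((β_t)² + (1/4)(β'')²)/β' ] at every point of Ω where β' ≠ 0. -/
noncomputable section

/-- One-dimensional exponential soliton. -/
def beta (k m : ℝ) (x t : ℝ) : ℝ :=
  -2 * k ^ 2 * (Real.exp (8 * k ^ 2 * m * t) + 2 * Real.exp (4 * k ^ 2 * x)) /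
    (Real.exp (8 * k ^ 2 * m * t) - 2 * Real.exp (4 * k ^ 2 * x))

def bx (k m : ℝ) (x t : ℝ) : ℝ := deriv (fun y => beta k m y t) x
def bxx (k m : ℝ) (x t : ℝ) : ℝ := deriv (fun y => bx k m y t) x
def bxxx (k m : ℝ) (x t : ℝ) : ℝ := deriv (fun y => bxx k m y t) x
def bt (k m : ℝ) (x t : ℝ) : ℝ := deriv (fun s => beta k m x s) t
def btt (k m : ℝ) (x t : ℝ) : ℝ := deriv (fun s => bt k m x s) t

namespace Stmt14Aux

/-- `A = e^{8k²mt}` -/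
def aa (k m t : ℝ) : ℝ := Real.exp (8 * k ^ 2 * m * t)
/-- `B = 2e^{4k²x}` -/
def bb (k x : ℝ) : ℝ := 2 * Real.exp (4 * k ^ 2 * x)

/-- closed form of β' -/
def e1 (k m x t : ℝ) : ℝ := -16 * k ^ 4 * aa k m t * bb k x / (aa k m t - bb k x) ^ 2
/-- closed form of β'' -/
def e2 (k m x t : ℝ) : ℝ :=
  -64 * k ^ 6 * aa k m t * bb k x * (aa k m t + bb k x) / (aa k m t - bb k x) ^ 3
/-- closed form of β''' -/
def e3 (k m x t : ℝ) : ℝ :=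
  -256 * k ^ 8 * aa k m t * bb k x *
    (aa k m t ^ 2 + 4 * aa k m t * bb k x + bb k x ^ 2) / (aa k m t - bb k x) ^ 4
/-- closed form of β_t -/
def e1t (k m x t : ℝ) : ℝ := 32 * k ^ 4 * m * aa k m t * bb k x / (aa k m t - bb k x) ^ 2
/-- closed form of β_tt -/
def e2t (k m x t : ℝ) : ℝ :=
  -256 * k ^ 6 * m ^ 2 * aa k m t * bb k x * (aa k m t + bb k x) / (aa k m t - bb k x) ^ 3
/-- closed form of the bracket -/
def eF (k m x t : ℝ) : ℝ := -64 * k ^ 4 * m ^ 2 * aa k m t * bb k x / (aa k m t - bb k x) ^ 2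

lemma hb (k x : ℝ) : HasDerivAt (fun y => bb k y) (4 * k ^ 2 * bb k x) x := by
  have h1 : HasDerivAt (fun y : ℝ => 4 * k ^ 2 * y) (4 * k ^ 2) x := by
    simpa using (hasDerivAt_id x).const_mul (4 * k ^ 2)
  have := h1.exp.const_mul 2
  refine this.congr_deriv (Eq.symm ?_)
  simp [bb]; ring

lemma ha (k m t : ℝ) : HasDerivAt (fun s => aa k m s) (8 * k ^ 2 * m * aa k m t) t := by
  have h1 : HasDerivAt (fun s : ℝ => 8 * k ^ 2 * m * s) (8 * k ^ 2 * m) t := by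
    simpa using (hasDerivAt_id t).const_mul (8 * k ^ 2 * m)
  have := h1.exp
  refine this.congr_deriv (Eq.symm ?_)
  simp [aa]; ring

lemma aa_pos (k m t : ℝ) : 0 < aa k m t := Real.exp_pos _
lemma bb_pos (k x : ℝ) : 0 < bb k x := by rw [bb]; positivity

section
variable {k m x t : ℝ}

lemma H0 (h : aa k m t - bb k x ≠ 0) : HasDerivAt (fun y => beta k m y t)
    (e1 k m x t) x := by
  have hnum : HasDerivAt (fun y => -2 * k ^ 2 * (aa k m t + bb k y))
      (-2 * k ^ 2 * (4 * k ^ 2 * bb k x)) x := ((hb k x).const_add (aa k m t)).const_mul _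
  have hden : HasDerivAt (fun y => aa k m t - bb k y) (-(4 * k ^ 2 * bb k x)) x :=
    (hb k x).const_sub (aa k m t)
  have := hnum.div hden h
  refine this.congr_deriv (Eq.symm ?_)
  rw [e1, div_eq_div_iff (pow_ne_zero 2 h) (pow_ne_zero 2 h)]; ring

lemma H1 (h : aa k m t - bb k x ≠ 0) : HasDerivAt (fun y => e1 k m y t) (e2 k m x t) x := by
  have hnum : HasDerivAt (fun y => -16 * k ^ 4 * aa k m t * bb k y)
      (-16 * k ^ 4 * aa k m t * (4 * k ^ 2 * bb k x)) x := (hb k x).const_mul _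
  have hden : HasDerivAt (fun y => (aa k m t - bb k y) ^ 2)
      ((2 : ℕ) * (aa k m t - bb k x) ^ 1 * -(4 * k ^ 2 * bb k x)) x :=
    ((hb k x).const_sub (aa k m t)).pow 2
  have := hnum.div hden (pow_ne_zero _ h)
  refine this.congr_deriv (Eq.symm ?_)
  rw [e2, div_eq_div_iff (pow_ne_zero 3 h) (pow_ne_zero 2 (pow_ne_zero 2 h))]; ring

lemma H2 (h : aa k m t - bb k x ≠ 0) : HasDerivAt (fun y => e2 k m y t) (e3 k m x t) x := by
  have hnum : HasDerivAt (fun y => -64 * k ^ 6 * aa k m t * bb k y * (aa k m t + bb k y))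
      (-64 * k ^ 6 * aa k m t * (4 * k ^ 2 * bb k x) * (aa k m t + bb k x)
        + -64 * k ^ 6 * aa k m t * bb k x * (4 * k ^ 2 * bb k x)) x :=
    ((hb k x).const_mul _).mul ((hb k x).const_add (aa k m t))
  have hden : HasDerivAt (fun y => (aa k m t - bb k y) ^ 3)
      ((3 : ℕ) * (aa k m t - bb k x) ^ 2 * -(4 * k ^ 2 * bb k x)) x :=
    ((hb k x).const_sub (aa k m t)).pow 3
  have := hnum.div hden (pow_ne_zero _ h)
  refine this.congr_deriv (Eq.symm ?_)
  rw [e3, div_eq_div_iff (pow_ne_zero 4 h) (pow_ne_zero 2 (pow_ne_zero 3 h))]; ring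

lemma HT0 (h : aa k m t - bb k x ≠ 0) : HasDerivAt (fun s => beta k m x s) (e1t k m x t) t := by
  have hnum : HasDerivAt (fun s => -2 * k ^ 2 * (aa k m s + bb k x))
      (-2 * k ^ 2 * (8 * k ^ 2 * m * aa k m t)) t :=
    ((ha k m t).add_const (bb k x)).const_mul _
  have hden : HasDerivAt (fun s => aa k m s - bb k x) (8 * k ^ 2 * m * aa k m t) t :=
    (ha k m t).sub_const (bb k x)
  have := hnum.div hden h
  refine this.congr_deriv (Eq.symm ?_)
  rw [e1t, div_eq_div_iff (pow_ne_zero 2 h) (pow_ne_zero 2 h)]; ring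

lemma HT1 (h : aa k m t - bb k x ≠ 0) : HasDerivAt (fun s => e1t k m x s) (e2t k m x t) t := by
  have hnum : HasDerivAt (fun s => 32 * k ^ 4 * m * aa k m s * bb k x)
      (32 * k ^ 4 * m * (8 * k ^ 2 * m * aa k m t) * bb k x) t := by
    exact ((ha k m t).const_mul (32 * k ^ 4 * m)).mul_const (bb k x)
  have hden : HasDerivAt (fun s => (aa k m s - bb k x) ^ 2)
      ((2 : ℕ) * (aa k m t - bb k x) ^ 1 * (8 * k ^ 2 * m * aa k m t)) t :=
    ((ha k m t).sub_const (bb k x)).pow 2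
  have := hnum.div hden (pow_ne_zero _ h)
  refine this.congr_deriv (Eq.symm ?_)
  rw [e2t, div_eq_div_iff (pow_ne_zero 3 h) (pow_ne_zero 2 (pow_ne_zero 2 h))]; ring

lemma HF (h : aa k m t - bb k x ≠ 0) : HasDerivAt (fun y => eF k m y t) (e2t k m x t) x := by
  have hnum : HasDerivAt (fun y => -64 * k ^ 4 * m ^ 2 * aa k m t * bb k y)
      (-64 * k ^ 4 * m ^ 2 * aa k m t * (4 * k ^ 2 * bb k x)) x := (hb k x).const_mul _
  have hden : HasDerivAt (fun y => (aa k m t - bb k y) ^ 2)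
      ((2 : ℕ) * (aa k m t - bb k x) ^ 1 * -(4 * k ^ 2 * bb k x)) x :=
    ((hb k x).const_sub (aa k m t)).pow 2
  have := hnum.div hden (pow_ne_zero _ h)
  refine this.congr_deriv (Eq.symm ?_)
  rw [e2t, div_eq_div_iff (pow_ne_zero 3 h) (pow_ne_zero 2 (pow_ne_zero 2 h))]; ring

end

section
variable {k m x t : ℝ}

lemma hS (k m t : ℝ) : IsOpen {y : ℝ | aa k m t - bb k y ≠ 0} := by
  have hc : Continuous fun y : ℝ => aa k m t - bb k y := by
    unfold aa bb; continuity
  exact isOpen_compl_singleton.preimage hc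

lemma hT (k m x : ℝ) : IsOpen {s : ℝ | aa k m s - bb k x ≠ 0} := by
  have hc : Continuous fun s : ℝ => aa k m s - bb k x := by
    unfold aa bb; continuity
  exact isOpen_compl_singleton.preimage hc

lemma bx_eq (h : aa k m t - bb k x ≠ 0) : bx k m x t = e1 k m x t := (H0 h).deriv

lemma bxx_eq (h : aa k m t - bb k x ≠ 0) : bxx k m x t = e2 k m x t := by
  have hev : (fun y => bx k m y t) =ᶠ[nhds x] fun y => e1 k m y t := by
    filter_upwards [(hS k m t).mem_nhds h] with y hy
    exact bx_eq hy
  rw [bxx, hev.deriv_eq, (H1 h).deriv]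

lemma bxxx_eq (h : aa k m t - bb k x ≠ 0) : bxxx k m x t = e3 k m x t := by
  have hev : (fun y => bxx k m y t) =ᶠ[nhds x] fun y => e2 k m y t := by
    filter_upwards [(hS k m t).mem_nhds h] with y hy
    exact bxx_eq hy
  rw [bxxx, hev.deriv_eq, (H2 h).deriv]

lemma bt_eq (h : aa k m t - bb k x ≠ 0) : bt k m x t = e1t k m x t := (HT0 h).deriv

lemma btt_eq (h : aa k m t - bb k x ≠ 0) : btt k m x t = e2t k m x t := by
  have hev : (fun s => bt k m x s) =ᶠ[nhds t] fun s => e1t k m x s := by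
    filter_upwards [(hT k m x).mem_nhds h] with s hs
    exact bt_eq hs
  rw [btt, hev.deriv_eq, (HT1 h).deriv]

lemma e1_ne (hk : k ≠ 0) (h : aa k m t - bb k x ≠ 0) : e1 k m x t ≠ 0 := by
  rw [e1]
  have h1 := aa_pos k m t
  have h2 := bb_pos k x
  apply div_ne_zero _ (pow_ne_zero _ h)
  have : (16 : ℝ) * k ^ 4 * aa k m t * bb k x > 0 := by positivity
  nlinarith

lemma identity (hk : k ≠ 0) (h : aa k m t - bb k x ≠ 0) :
    -(1 / 2) * e1 k m x t ^ 2 - 1 / 4 * e3 k m x t +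
      (e1t k m x t ^ 2 + 1 / 4 * e2 k m x t ^ 2) / e1 k m x t = eF k m x t := by
  have ha' := (aa_pos k m t).ne'
  have hb' := (bb_pos k x).ne'
  rw [e1, e2, e3, e1t, eF, div_div_eq_mul_div]
  field_simp
  ring

end

end Stmt14Aux

open Stmt14Aux in
/-- β(x,t) = -2k²(e^{8k²mt}+2e^{4k²x})/(e^{8k²mt}-2e^{4k²x}) satisfies the canonical PDE
    ∂²β/∂t² = ∂/∂x[-(1/2)(β')² - (1/4)β''' + ((β_t)² + (1/4)(β'')²)/β']. -/
theorem stmt_14 (k m : ℝ) (hk : k ≠ 0) (x t : ℝ)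
    (hΩ : Real.exp (8 * k ^ 2 * m * t) ≠ 2 * Real.exp (4 * k ^ 2 * x))
    (hbx : bx k m x t ≠ 0) :
    btt k m x t =
      deriv (fun y => -(1 / 2) * (bx k m y t) ^ 2 - (1 / 4) * bxxx k m y t +
        ((bt k m y t) ^ 2 + (1 / 4) * (bxx k m y t) ^ 2) / bx k m y t) x := by
  have h : aa k m t - bb k x ≠ 0 := sub_ne_zero.mpr hΩ
  have hev : (fun y => -(1 / 2) * (bx k m y t) ^ 2 - (1 / 4) * bxxx k m y t +
      ((bt k m y t) ^ 2 + (1 / 4) * (bxx k m y t) ^ 2) / bx k m y t)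
      =ᶠ[nhds x] fun y => eF k m y t := by
    filter_upwards [(hS k m t).mem_nhds h] with y hy
    rw [bx_eq hy, bxx_eq hy, bxxx_eq hy, bt_eq hy]
    exact identity hk hy
  rw [hev.deriv_eq, (HF h).deriv, btt_eq h]

end
end
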